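/- Let α > 0 and let B be a real random variable with E(|B|^α) = 1 and P(B ≠ 0) = 1. Let R̃ be a real random variable independent of nonnegative constants K₊, K₋ such that t^α P(R̃ > t) → K₊ and t^α P(R̃ < −t) → K₋ as t → ∞. Suppose R = A + B R̃ where (A, B) is a bounded random pair independent of R̃ (|A| ≤ a, |B| ≤ m₀ a.s.). Then t^α P(R > t) → E(|B|^α (1_{B>0} K₊ + 1_{B<0} K₋)) as t → ∞. -/

import Mathlib

open MeasureTheory Filter ProbabilityTheory

lemma ratio_tendsto18 (a0 b : ℝ) :
    Tendsto (fun t : ℝ => t / ((t - a0) / b)) atTop (nhds b) := by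
  have h1 : Tendsto (fun t : ℝ => t - a0) atTop atTop :=
    tendsto_atTop_add_const_right _ (-a0) tendsto_id
  have h2 : Tendsto (fun t : ℝ => 1 + a0 / (t - a0)) atTop (nhds 1) := by
    have := Tendsto.div_atTop (tendsto_const_nhds (x := a0)) h1
    simpa using tendsto_const_nhds.add this
  have h3 : Tendsto (fun t : ℝ => t / (t - a0)) atTop (nhds 1) := by
    refine h2.congr' ?_
    filter_upwards [h1.eventually_gt_atTop 0] with t ht
    field_simp
    ring
  have h4 : Tendsto (fun t : ℝ => b * (t / (t - a0))) atTop (nhds b) := by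
    simpa using (tendsto_const_nhds (x := b)).mul h3
  refine h4.congr (fun t => ?_)
  rw [div_div_eq_mul_div]
  ring

lemma setpos18 (a0 b t : ℝ) (hb : 0 < b) :
    {r : ℝ | a0 + b * r > t} = {r : ℝ | r > (t - a0) / b} := by
  ext r
  simp only [Set.mem_setOf_eq]
  rw [gt_iff_lt, ← sub_lt_iff_lt_add', gt_iff_lt, div_lt_iff₀ hb, mul_comm]

lemma setneg18 (a0 b t : ℝ) (hb : b < 0) :
    {r : ℝ | a0 + b * r > t} = {r : ℝ | r < -((t - a0) / (-b))} := by
  ext r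
  simp only [Set.mem_setOf_eq]
  rw [gt_iff_lt, ← sub_lt_iff_lt_add', div_neg, neg_neg, lt_div_iff_of_neg hb, mul_comm]

/-- generic piece: if s t → ∞, t/(s t) → c > 0, and u^α * g(u) → K, then
    t^α * g (s t) → c^α * K -/
lemma piece18 (α : ℝ) (g : ℝ → ℝ) (K c : ℝ) (hc : 0 < c) (s : ℝ → ℝ)
    (hs : Tendsto s atTop atTop)
    (hrat : Tendsto (fun t => t / s t) atTop (nhds c))
    (hg : Tendsto (fun u => u ^ α * g u) atTop (nhds K)) :
    Tendsto (fun t : ℝ => t ^ α * g (s t)) atTop (nhds (c ^ α * K)) := by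
  have h1 : Tendsto (fun t => (t / s t) ^ α) atTop (nhds (c ^ α)) :=
    hrat.rpow_const (Or.inl hc.ne')
  have h2 : Tendsto (fun t => (s t) ^ α * g (s t)) atTop (nhds K) := hg.comp hs
  have h3 := h1.mul h2
  refine h3.congr' ?_
  filter_upwards [hs.eventually_gt_atTop 0, eventually_gt_atTop (0:ℝ)] with t hst ht
  rw [← mul_assoc, ← Real.mul_rpow (by positivity) hst.le, div_mul_cancel₀ _ hst.ne']

lemma ptlim18 (ν : Measure ℝ) [IsProbabilityMeasure ν] (α : ℝ) (hα : 0 < α) (Kp Km : ℝ)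
    (hp : Tendsto (fun t : ℝ => t ^ α * (ν {r | r > t}).toReal) atTop (nhds Kp))
    (hm : Tendsto (fun t : ℝ => t ^ α * (ν {r | r < -t}).toReal) atTop (nhds Km))
    (a0 b : ℝ) (hb : b ≠ 0) :
    Tendsto (fun t : ℝ => t ^ α * (ν {r | a0 + b * r > t}).toReal) atTop
      (nhds (|b| ^ α * ((if 0 < b then Kp else 0) + (if b < 0 then Km else 0)))) := by
  rcases hb.lt_or_gt with hneg | hpos
  · have hb' : (0:ℝ) < -b := by linarith
    have hs : Tendsto (fun t : ℝ => (t - a0) / (-b)) atTop atTop :=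
      (tendsto_atTop_add_const_right _ (-a0) tendsto_id).atTop_div_const hb'
    have key := piece18 α (fun u => (ν {r | r < -u}).toReal) Km (-b) hb' _ hs
      (ratio_tendsto18 a0 (-b)) hm
    have heq : |b| ^ α * ((if 0 < b then Kp else 0) + (if b < 0 then Km else 0))
        = (-b) ^ α * Km := by
      rw [abs_of_neg hneg]
      simp [hneg, not_lt.mpr hneg.le, asymm hneg]
    rw [heq]
    refine key.congr (fun t => ?_)
    rw [setneg18 a0 b t hneg]
  · have hs : Tendsto (fun t : ℝ => (t - a0) / b) atTop atTop :=
      (tendsto_atTop_add_const_right _ (-a0) tendsto_id).atTop_div_const hpos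
    have key := piece18 α (fun u => (ν {r | r > u}).toReal) Kp b hpos _ hs
      (ratio_tendsto18 a0 b) hp
    have heq : |b| ^ α * ((if 0 < b then Kp else 0) + (if b < 0 then Km else 0))
        = b ^ α * Kp := by
      rw [abs_of_pos hpos]
      simp [hpos, asymm hpos]
    rw [heq]
    refine key.congr (fun t => ?_)
    rw [setpos18 a0 b t hpos]

theorem stmt_18 {Ω : Type*} [MeasurableSpace Ω] (μ : Measure Ω) [IsProbabilityMeasure μ]
    (A B R' : Ω → ℝ) (hA : Measurable A) (hB : Measurable B) (hR' : Measurable R')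
    (hindep : IndepFun (fun ω => (A ω, B ω)) R' μ)
    (α : ℝ) (hα : 0 < α)
    (hBmom : ∫ ω, |B ω| ^ α ∂μ = 1)
    (hBne : ∀ᵐ ω ∂μ, B ω ≠ 0)
    (a m₀ : ℝ) (hAbd : ∀ᵐ ω ∂μ, |A ω| ≤ a) (hBbd : ∀ᵐ ω ∂μ, |B ω| ≤ m₀)
    (Kp Km : ℝ) (hKp : 0 ≤ Kp) (hKm : 0 ≤ Km)
    (htailp : Tendsto (fun t : ℝ => t ^ α * (μ {ω | R' ω > t}).toReal) atTop (nhds Kp))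
    (htailm : Tendsto (fun t : ℝ => t ^ α * (μ {ω | R' ω < -t}).toReal) atTop (nhds Km)) :
    Tendsto (fun t : ℝ => t ^ α * (μ {ω | A ω + B ω * R' ω > t}).toReal) atTop
      (nhds (∫ ω, |B ω| ^ α *
        ((if 0 < B ω then Kp else 0) + (if B ω < 0 then Km else 0)) ∂μ)) := by
  classical
  have hX : Measurable (fun ω => (A ω, B ω)) := hA.prodMk hB
  set ν : Measure ℝ := μ.map R' with hν
  set ρ : Measure (ℝ × ℝ) := μ.map (fun ω => (A ω, B ω)) with hρ
  have hprob : IsProbabilityMeasure ν := Measure.isProbabilityMeasure_map hR'.aemeasurable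
  have hprob2 : IsProbabilityMeasure ρ := Measure.isProbabilityMeasure_map hX.aemeasurable
  -- tails in terms of ν
  have hp' : Tendsto (fun t : ℝ => t ^ α * (ν {r | r > t}).toReal) atTop (nhds Kp) := by
    refine htailp.congr (fun t => ?_)
    have : ν {r | r > t} = μ {ω | R' ω > t} := by
      rw [hν, show {r : ℝ | r > t} = Set.Ioi t from rfl,
        Measure.map_apply hR' measurableSet_Ioi]
      rfl
    rw [this]
  have hm' : Tendsto (fun t : ℝ => t ^ α * (ν {r | r < -t}).toReal) atTop (nhds Km) := by
    refine htailm.congr (fun t => ?_)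
    have : ν {r | r < -t} = μ {ω | R' ω < -t} := by
      rw [hν, show {r : ℝ | r < -t} = Set.Iio (-t) from rfl,
        Measure.map_apply hR' measurableSet_Iio]
      rfl
    rw [this]
  -- a.e. properties transported to ρ
  have hGmeas : MeasurableSet {x : ℝ × ℝ | |x.1| ≤ a ∧ |x.2| ≤ m₀ ∧ x.2 ≠ 0} := by
    refine MeasurableSet.inter ?_ (MeasurableSet.inter ?_ ?_)
    · exact measurableSet_le measurable_fst.abs measurable_const
    · exact measurableSet_le measurable_snd.abs measurable_const
    · exact (measurableSet_eq_fun measurable_snd measurable_const).compl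
  have hρae : ∀ᵐ x ∂ρ, |x.1| ≤ a ∧ |x.2| ≤ m₀ ∧ x.2 ≠ 0 := by
    rw [hρ, ae_map_iff hX.aemeasurable hGmeas]
    filter_upwards [hAbd, hBbd, hBne] with ω h1 h2 h3
    exact ⟨h1, h2, h3⟩
  -- positivity facts about a, m₀
  obtain ⟨x₀, hx₀⟩ := hρae.exists
  have ha0 : 0 ≤ a := le_trans (abs_nonneg _) hx₀.1
  have hm₀ : 0 < m₀ := lt_of_lt_of_le (abs_pos.mpr hx₀.2.2) hx₀.2.1
  -- measurable set for tail event
  have hS : ∀ t : ℝ, MeasurableSet {p : (ℝ × ℝ) × ℝ | p.1.1 + p.1.2 * p.2 > t} := fun t =>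
    measurableSet_lt measurable_const
      (measurable_fst.fst.add (measurable_fst.snd.mul measurable_snd))
  have hmap := (indepFun_iff_map_prod_eq_prod_map_map hX.aemeasurable hR'.aemeasurable).mp hindep
  -- rewrite the tail probability as an integral over ρ
  have heq : ∀ t : ℝ, t ^ α * (μ {ω | A ω + B ω * R' ω > t}).toReal
      = ∫ x, t ^ α * (ν {r | x.1 + x.2 * r > t}).toReal ∂ρ := by
    intro t
    have h1 : μ {ω | A ω + B ω * R' ω > t}
        = (ρ.prod ν) {p : (ℝ × ℝ) × ℝ | p.1.1 + p.1.2 * p.2 > t} := by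
      rw [hρ, hν, ← hmap, Measure.map_apply (hX.prodMk hR') (hS t)]
      rfl
    have h2 : (ρ.prod ν) {p : (ℝ × ℝ) × ℝ | p.1.1 + p.1.2 * p.2 > t}
        = ∫⁻ x, ν {r | x.1 + x.2 * r > t} ∂ρ := by
      rw [Measure.prod_apply (hS t)]
      rfl
    have h3 : ((∫⁻ x, ν {r | x.1 + x.2 * r > t} ∂ρ)).toReal
        = ∫ x, (ν {r | x.1 + x.2 * r > t}).toReal ∂ρ := by
      rw [integral_toReal]
      · exact (measurable_measure_prodMk_left (hS t)).aemeasurable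
      · exact ae_of_all _ fun x => measure_lt_top ν _
    rw [h1, h2, h3, ← integral_const_mul]
  -- the limit function
  set L : ℝ × ℝ → ℝ := fun x =>
    |x.2| ^ α * ((if 0 < x.2 then Kp else 0) + (if x.2 < 0 then Km else 0)) with hL
  have hLmeas : Measurable L := by
    refine Measurable.mul ?_ (Measurable.add ?_ ?_)
    · fun_prop
    · exact Measurable.ite (measurableSet_lt measurable_const measurable_snd)
        measurable_const measurable_const
    · exact Measurable.ite (measurableSet_lt measurable_snd measurable_const)
        measurable_const measurable_const
  -- target integral equals ∫ L ∂ρ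
  have htarget : ∫ x, L x ∂ρ = ∫ ω, |B ω| ^ α *
      ((if 0 < B ω then Kp else 0) + (if B ω < 0 then Km else 0)) ∂μ := by
    rw [hρ, integral_map hX.aemeasurable hLmeas.aestronglyMeasurable]
  -- integrable bound
  have hBint : Integrable (fun ω => |B ω| ^ α) μ := integrable_of_integral_eq_one hBmom
  have hBint' : Integrable (fun x : ℝ × ℝ => |x.2| ^ α) ρ := by
    rw [hρ, integrable_map_measure (Measurable.aestronglyMeasurable (by fun_prop))
      hX.aemeasurable]
    exact hBint
  set C : ℝ := 2 ^ α * max (Kp + 1) (Km + 1) with hC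
  have hC0 : 0 ≤ C := by
    apply mul_nonneg (Real.rpow_nonneg (by norm_num) _)
    exact le_trans (by linarith) (le_max_left _ _)
  have hboundint : Integrable (fun x : ℝ × ℝ => C * |x.2| ^ α) ρ := hBint'.const_mul C
  -- tail bounds for ν
  obtain ⟨s₀, hs₀⟩ : ∃ s₀ : ℝ, ∀ s ≥ s₀,
      s ^ α * (ν {r | r > s}).toReal ≤ Kp + 1 ∧ s ^ α * (ν {r | r < -s}).toReal ≤ Km + 1 := by
    have e1 := hp'.eventually (eventually_le_nhds (lt_add_one Kp))
    have e2 := hm'.eventually (eventually_le_nhds (lt_add_one Km))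
    obtain ⟨u, hu⟩ := eventually_atTop.mp (e1.and e2)
    exact ⟨u, hu⟩
  -- apply dominated convergence
  have main : Tendsto (fun t : ℝ => ∫ x, t ^ α * (ν {r | x.1 + x.2 * r > t}).toReal ∂ρ)
      atTop (nhds (∫ x, L x ∂ρ)) := by
    refine tendsto_integral_filter_of_dominated_convergence (fun x => C * |x.2| ^ α)
      ?_ ?_ hboundint ?_
    · refine Eventually.of_forall (fun t => ?_)
      exact ((measurable_measure_prodMk_left (hS t)).ennreal_toReal.const_mul
        _).aestronglyMeasurable
    · -- domination, eventually in t
      filter_upwards [eventually_ge_atTop (2 * a), eventually_ge_atTop 1,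
        eventually_ge_atTop (m₀ * s₀ + a)] with t ht1 ht2 ht3
      filter_upwards [hρae] with x hx
      obtain ⟨hxa, hxb, hxb0⟩ := hx
      have hb : 0 < |x.2| := abs_pos.mpr hxb0
      have ha1 : x.1 ≤ a := le_trans (le_abs_self _) hxa
      have hta : (0:ℝ) < t - x.1 := by nlinarith [abs_nonneg x.1]
      set s : ℝ := (t - x.1) / |x.2| with hs
      have hspos : 0 < s := div_pos hta hb
      have hss₀ : s₀ ≤ s := by
        rw [hs, le_div_iff₀ hb]
        rcases le_or_gt s₀ 0 with h | h
        · nlinarith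
        · nlinarith
      have htle : t ≤ 2 * |x.2| * s := by
        have hid : 2 * |x.2| * s = 2 * (t - x.1) := by
          rw [hs]; field_simp
        rw [hid]; linarith
      have htpow : t ^ α ≤ 2 ^ α * |x.2| ^ α * s ^ α := by
        calc t ^ α ≤ (2 * |x.2| * s) ^ α := by
              apply Real.rpow_le_rpow (by linarith) htle hα.le
          _ = 2 ^ α * |x.2| ^ α * s ^ α := by
              rw [Real.mul_rpow (by positivity) hspos.le, Real.mul_rpow (by norm_num) hb.le]
      -- the tail measure bound
      have hkey : (ν {r | x.1 + x.2 * r > t}).toReal ≥ 0 := ENNReal.toReal_nonneg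
      have hmax : s ^ α * (ν {r | x.1 + x.2 * r > t}).toReal ≤ max (Kp + 1) (Km + 1) := by
        rcases hxb0.lt_or_gt with hneg | hpos
        · rw [setneg18 x.1 x.2 t hneg]
          have : -((t - x.1) / (-x.2)) = -s := by
            rw [hs, abs_of_neg hneg]
          rw [this]
          exact le_trans (hs₀ s hss₀).2 (le_max_right _ _)
        · rw [setpos18 x.1 x.2 t hpos]
          have : (t - x.1) / x.2 = s := by rw [hs, abs_of_pos hpos]
          rw [this]
          exact le_trans (hs₀ s hss₀).1 (le_max_left _ _)
      have htnn : 0 ≤ t ^ α := Real.rpow_nonneg (by linarith) _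
      rw [Real.norm_eq_abs, abs_of_nonneg (mul_nonneg htnn hkey)]
      calc t ^ α * (ν {r | x.1 + x.2 * r > t}).toReal
          ≤ 2 ^ α * |x.2| ^ α * s ^ α * (ν {r | x.1 + x.2 * r > t}).toReal :=
            mul_le_mul_of_nonneg_right htpow hkey
        _ = 2 ^ α * (s ^ α * (ν {r | x.1 + x.2 * r > t}).toReal) * |x.2| ^ α := by ring
        _ ≤ 2 ^ α * max (Kp + 1) (Km + 1) * |x.2| ^ α := by
            have h2 : (0:ℝ) ≤ 2 ^ α := Real.rpow_nonneg (by norm_num) _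
            have := mul_le_mul_of_nonneg_left hmax h2
            exact mul_le_mul_of_nonneg_right this (Real.rpow_nonneg (abs_nonneg _) _)
        _ = C * |x.2| ^ α := by rw [hC]
    · -- pointwise limit
      filter_upwards [hρae] with x hx
      exact ptlim18 ν α hα Kp Km hp' hm' x.1 x.2 hx.2.2
  rw [← htarget]
  exact main.congr (fun t => (heq t).symm)
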